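/- Let H be a directed acyclic graph on vertex set V with |V| = n. A collection T of induced tubes of H is an admissible tubing of H if and only if: (1) |T| = n; (2) the tubes in T are pairwise non-overlapping; and (3) for each tube T ∈ T there are no edges v → w of H with v ∉ T and w ∈ T. -/

import Mathlib

open SimpleGraph

namespace Cosmo

variable {V : Type*}

/-- A tube of `G` is a connected subgraph. -/
def IsTube (G : SimpleGraph V) (T : G.Subgraph) : Prop := T.Connected

/-- Tubes are nested if one contains the other. -/
def Nested {G : SimpleGraph V} (S T : G.Subgraph) : Prop := S ≤ T ∨ T ≤ S

/-- Tubes overlap if their (vertex) intersection is nonempty and they are not nested. -/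
def Overlapping {G : SimpleGraph V} (S T : G.Subgraph) : Prop :=
  (S.verts ∩ T.verts).Nonempty ∧ ¬ Nested S T

/-- Tubes are incompatible if there is an edge of `G` between them and they are not nested. -/
def Incompatible {G : SimpleGraph V} (S T : G.Subgraph) : Prop :=
  (∃ u w, G.Adj u w ∧ u ∈ S.verts ∧ w ∈ T.verts) ∧ ¬ Nested S T

/-- Tubes are compatible if they are not incompatible. -/
def Compatible {G : SimpleGraph V} (S T : G.Subgraph) : Prop := ¬ Incompatible S T

/-- A complete tubing: a maximal collection of pairwise non-overlapping tubes. -/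
def IsCompleteTubing (G : SimpleGraph V) (𝒯 : Set G.Subgraph) : Prop :=
  Maximal (fun 𝒞 : Set G.Subgraph =>
    (∀ T ∈ 𝒞, IsTube G T) ∧ 𝒞.Pairwise fun S T => ¬ Overlapping S T) 𝒯

/-- An admissible tubing: a maximal collection of pairwise compatible induced tubes. -/
def IsAdmissibleTubing (G : SimpleGraph V) (𝒯 : Set G.Subgraph) : Prop :=
  Maximal (fun 𝒞 : Set G.Subgraph =>
    (∀ T ∈ 𝒞, IsTube G T ∧ T.IsInduced) ∧ 𝒞.Pairwise Compatible) 𝒯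

/-- A labeling of an admissible tubing by the vertices, as in the bijection lemma:
`g v` is the tube associated to `v`, i.e. `v ∈ g v` and `v` avoids all strictly
smaller tubes of the tubing. -/
def IsVertexLabeling (G : SimpleGraph V) (𝒯 : Set G.Subgraph) (g : V → G.Subgraph) : Prop :=
  Set.BijOn g Set.univ 𝒯 ∧ ∀ v, v ∈ (g v).verts ∧ ∀ S ∈ 𝒯, S < g v → v ∉ S.verts



section Aux

variable {V : Type*} {G : SimpleGraph V}

instance subgraph_finite {V : Type*} [Finite V] (G : SimpleGraph V) : Finite G.Subgraph := by
  have h : Function.Injective (fun S : G.Subgraph => (S.verts, S.Adj)) := by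
    intro S T h
    simp only [Prod.mk.injEq] at h
    exact SimpleGraph.Subgraph.ext h.1 h.2
  exact Finite.of_injective _ h

lemma nested_symm {S T : G.Subgraph} (h : Nested S T) : Nested T S := h.elim Or.inr Or.inl

lemma le_of_verts_subset {S T : G.Subgraph} (hT : T.IsInduced) (h : S.verts ⊆ T.verts) :
    S ≤ T :=
  ⟨h, fun a b hab => hT (h (S.edge_vert hab)) (h (S.edge_vert hab.symm)) (S.adj_sub hab)⟩

lemma lt_verts_ssubset {S T : G.Subgraph} (hS : S.IsInduced) (h : S < T) :
    S.verts ⊂ T.verts := by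
  refine ⟨Subgraph.verts_mono h.le, fun hsub => h.ne ?_⟩
  exact le_antisymm h.le (le_of_verts_subset hS hsub)

lemma walk_crossing {α : Type*} {G' : SimpleGraph α} (p : α → Prop) :
    ∀ {u v : α}, G'.Walk u v → p u → ¬ p v → ∃ a b, G'.Adj a b ∧ p a ∧ ¬ p b := by
  intro u v w
  induction w with
  | nil => intro hu hv; exact absurd hu hv
  | @cons a b c h w ih =>
    intro hu hv
    by_cases hx : p b
    · exact ih hx hv
    · exact ⟨a, b, h, hu, hx⟩

lemma tube_boundary {T : G.Subgraph} (hT : T.Connected) {A : Set V}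
    (h1 : ∃ x ∈ T.verts, x ∈ A) (h2 : ∃ y ∈ T.verts, y ∉ A) :
    ∃ a b, G.Adj a b ∧ a ∈ T.verts ∧ a ∈ A ∧ b ∈ T.verts ∧ b ∉ A := by
  obtain ⟨x, hxT, hxA⟩ := h1
  obtain ⟨y, hyT, hyA⟩ := h2
  obtain ⟨w⟩ := hT.coe.preconnected ⟨x, hxT⟩ ⟨y, hyT⟩
  obtain ⟨a, b, hab, ha, hb⟩ := walk_crossing (fun v : T.verts => (v : V) ∈ A) w hxA hyA
  exact ⟨a, b, T.adj_sub hab, a.2, ha, b.2, hb⟩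

lemma overlapping_incompatible {S T : G.Subgraph} (hS : IsTube G S)
    (hTi : T.IsInduced) (h : Overlapping S T) : Incompatible S T := by
  obtain ⟨⟨x, hxS, hxT⟩, hn⟩ := h
  have hns : ¬ S.verts ⊆ T.verts := fun hsub => hn (Or.inl (le_of_verts_subset hTi hsub))
  obtain ⟨y, hyS, hyT⟩ := Set.not_subset.1 hns
  obtain ⟨a, b, hab, haS, haT, hbS, hbT⟩ :=
    tube_boundary (A := T.verts) hS ⟨x, hxS, hxT⟩ ⟨y, hyS, hyT⟩
  exact ⟨⟨b, a, hab.symm, hbS, haT⟩, hn⟩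

lemma compatible_of_dc {H : V → V → Prop} (hG : G = SimpleGraph.fromRel H) {S T : G.Subgraph}
    (hS : ∀ u v, H u v → v ∈ S.verts → u ∈ S.verts)
    (hT : ∀ u v, H u v → v ∈ T.verts → u ∈ T.verts)
    (hno : ¬ Overlapping S T) : Compatible S T := by
  rintro ⟨⟨u, w, huw, huS, hwT⟩, hn⟩
  rw [hG, fromRel_adj] at huw
  apply hno
  refine ⟨?_, hn⟩
  rcases huw.2 with h | h
  · exact ⟨u, huS, hT u w h hwT⟩
  · exact ⟨w, hS w u h huS, hwT⟩

lemma exists_private {H : V → V → Prop} [Fintype V] (hG : G = SimpleGraph.fromRel H)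
    (F : Set G.Subgraph)
    (hconn : ∀ T ∈ F, IsTube G T) (hind : ∀ T ∈ F, T.IsInduced)
    (hdc : ∀ T ∈ F, ∀ u v, H u v → v ∈ T.verts → u ∈ T.verts)
    (hlam : F.Pairwise fun S T => ¬ Overlapping S T)
    {T : G.Subgraph} (hT : T ∈ F) :
    ∃ v ∈ T.verts, ∀ S ∈ F, S < T → v ∉ S.verts := by
  by_contra hcon
  push_neg at hcon
  have hM : ∀ v ∈ T.verts, ∃ M, M ∈ F ∧ M < T ∧ v ∈ M.verts ∧
      ∀ S ∈ F, S < T → v ∈ S.verts → S ≤ M := by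
    intro v hv
    obtain ⟨S₀, hS₀F, hS₀, hvS₀⟩ := hcon v hv
    set D : Set G.Subgraph := {S | S ∈ F ∧ S < T ∧ v ∈ S.verts} with hD
    obtain ⟨M, hMD, hMmax⟩ :=
      Set.Finite.exists_maximalFor id D (Set.toFinite D) ⟨S₀, ⟨hS₀F, hS₀, hvS₀⟩⟩
    obtain ⟨hMF', hMlt', hvM'⟩ := hMD
    refine ⟨M, hMF', hMlt', hvM', ?_⟩
    intro S hSF hSlt hvS
    rcases eq_or_ne S M with rfl | hne
    · exact le_refl S
    · have hnov : ¬ Overlapping S M := hlam hSF hMF' hne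
      have hnest : Nested S M := by
        by_contra hn
        exact hnov ⟨⟨v, hvS, hvM'⟩, hn⟩
      rcases hnest with h | h
      · exact h
      · exact hMmax ⟨hSF, hSlt, hvS⟩ h
  choose! M hMF hMlt hvM hMmax using hM
  have hblock : ∀ v ∈ T.verts, ∀ w ∈ T.verts, w ∈ (M v).verts → M w = M v := by
    intro v hv w hw hwMv
    have h1 : M v ≤ M w := hMmax w hw (M v) (hMF v hv) (hMlt v hv) hwMv
    have h2 : M w ≤ M v :=
      hMmax v hv (M w) (hMF w hw) (hMlt w hw) (Subgraph.verts_mono h1 (hvM v hv))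
    exact le_antisymm h2 h1
  obtain ⟨v₀, hv₀⟩ := (hconn T hT).nonempty
  have hssub : (M v₀).verts ⊂ T.verts :=
    lt_verts_ssubset (hind _ (hMF v₀ hv₀)) (hMlt v₀ hv₀)
  obtain ⟨y, hyT, hyM⟩ := Set.exists_of_ssubset hssub
  obtain ⟨a, b, hab, haT, haM, hbT, hbM⟩ :=
    tube_boundary (A := (M v₀).verts) (hconn T hT) ⟨v₀, hv₀, hvM v₀ hv₀⟩ ⟨y, hyT, hyM⟩
  rw [hG, fromRel_adj] at hab
  rcases hab.2 with h | h
  · have hbMb : b ∈ (M b).verts := hvM b hbT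
    have haMb : a ∈ (M b).verts := hdc (M b) (hMF b hbT) a b h hbMb
    have e1 : M a = M b := hblock b hbT a haT haMb
    have e2 : M a = M v₀ := hblock v₀ hv₀ a haT haM
    rw [← e1, e2] at hbMb
    exact hbM hbMb
  · exact hbM (hdc (M v₀) (hMF v₀ hv₀) b a h haM)

lemma overlapping_symm {S T : G.Subgraph} (h : Overlapping S T) : Overlapping T S :=
  ⟨by rw [Set.inter_comm]; exact h.1, fun hn => h.2 (nested_symm hn)⟩

lemma family_inj {H : V → V → Prop} [Fintype V] (hG : G = SimpleGraph.fromRel H)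
    (F : Set G.Subgraph)
    (hconn : ∀ T ∈ F, IsTube G T) (hind : ∀ T ∈ F, T.IsInduced)
    (hdc : ∀ T ∈ F, ∀ u v, H u v → v ∈ T.verts → u ∈ T.verts)
    (hlam : F.Pairwise fun S T => ¬ Overlapping S T) :
    ∃ f : F → V, Function.Injective f ∧
      ∀ T : F, f T ∈ (T : G.Subgraph).verts ∧
        ∀ S ∈ F, S < (T : G.Subgraph) → f T ∉ S.verts := by
  choose f hf1 hf2 using fun T : F => exists_private hG F hconn hind hdc hlam T.2
  refine ⟨f, ?_, fun T => ⟨hf1 T, hf2 T⟩⟩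
  intro S T he
  by_contra hne
  have hne' : (S : G.Subgraph) ≠ (T : G.Subgraph) := fun e => hne (Subtype.ext e)
  have hnov := hlam S.2 T.2 hne'
  have hfTS : f T ∈ (S : G.Subgraph).verts := by have := hf1 S; rwa [he] at this
  have hfST : f S ∈ (T : G.Subgraph).verts := by have := hf1 T; rwa [← he] at this
  have hint : ((S : G.Subgraph).verts ∩ (T : G.Subgraph).verts).Nonempty :=
    ⟨f S, hf1 S, hfST⟩
  have hnest : Nested (S : G.Subgraph) (T : G.Subgraph) := by
    by_contra hn
    exact hnov ⟨hint, hn⟩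
  rcases hnest with h | h
  · rcases eq_or_lt_of_le h with h' | h'
    · exact hne' h'
    · exact hf2 T S S.2 h' hfTS
  · rcases eq_or_lt_of_le h with h' | h'
    · exact hne' h'.symm
    · exact hf2 S T T.2 h' hfST

lemma family_card_le {H : V → V → Prop} [Fintype V] (hG : G = SimpleGraph.fromRel H)
    (F : Set G.Subgraph)
    (hconn : ∀ T ∈ F, IsTube G T) (hind : ∀ T ∈ F, T.IsInduced)
    (hdc : ∀ T ∈ F, ∀ u v, H u v → v ∈ T.verts → u ∈ T.verts)
    (hlam : F.Pairwise fun S T => ¬ Overlapping S T) :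
    F.ncard ≤ Fintype.card V := by
  obtain ⟨f, hinj, -⟩ := family_inj hG F hconn hind hdc hlam
  have h := Nat.card_le_card_of_injective f hinj
  rwa [Nat.card_coe_set_eq, Nat.card_eq_fintype_card] at h

end Aux

/-- a collection of induced tubes of a finite DAG `H` (with underlying graph `G`)
is an admissible tubing of `H` (i.e. an admissible tubing of `G` inducing the orientation `H`)
iff it has `|V|` tubes, is pairwise non-overlapping, and no tube has an incoming edge. -/
theorem admissibleTubing_dag_characterization {V : Type*} [Fintype V]
    (H : V → V → Prop) (hac : ∀ v, ¬ Relation.TransGen H v v)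
    (G : SimpleGraph V) (hG : G = SimpleGraph.fromRel H)
    (𝒯 : Set G.Subgraph) (htube : ∀ T ∈ 𝒯, IsTube G T ∧ T.IsInduced) :
    (IsAdmissibleTubing G 𝒯 ∧
      ∃ g : V → G.Subgraph, IsVertexLabeling G 𝒯 g ∧ ∀ u v, H u v → g u < g v)
    ↔ (𝒯.ncard = Fintype.card V ∧
        (𝒯.Pairwise fun S T => ¬ Overlapping S T) ∧
        ∀ T ∈ 𝒯, ∀ u v, H u v → v ∈ T.verts → u ∈ T.verts) := by
  constructor
  · rintro ⟨hadm, g, ⟨hbij, hlab⟩, horder⟩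
    refine ⟨?_, ?_, ?_⟩
    · rw [← hbij.image_eq, Set.ncard_image_of_injOn hbij.injOn, Set.ncard_univ,
        Nat.card_eq_fintype_card]
    · intro S hS T hT hne hov
      exact hadm.1.2 hS hT hne (overlapping_incompatible (htube S hS).1 (htube T hT).2 hov)
    · intro T hT u v huv hvT
      have hgv : g v ∈ 𝒯 := hbij.mapsTo (Set.mem_univ v)
      have hvgv : v ∈ (g v).verts := (hlab v).1
      have hugu : u ∈ (g u).verts := (hlab u).1
      have hlt : g u < g v := horder u v huv
      by_cases he : T = g v
      · rw [he]
        exact SimpleGraph.Subgraph.verts_mono hlt.le hugu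
      · have hcomp : Compatible T (g v) := hadm.1.2 hT hgv he
        have hnest : Nested T (g v) := by
          by_contra hn
          exact hcomp (overlapping_incompatible (htube T hT).1 (htube _ hgv).2
            ⟨⟨v, hvT, hvgv⟩, hn⟩)
        rcases hnest with h | h
        · rcases lt_or_eq_of_le h with h' | h'
          · exact absurd hvT ((hlab v).2 T hT h')
          · exact absurd h' he
        · exact SimpleGraph.Subgraph.verts_mono h (SimpleGraph.Subgraph.verts_mono hlt.le hugu)
  · rintro ⟨hcard, hlam, hdc⟩
    have hconn : ∀ T ∈ 𝒯, IsTube G T := fun T hT => (htube T hT).1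
    have hind : ∀ T ∈ 𝒯, T.IsInduced := fun T hT => (htube T hT).2
    obtain ⟨f, hfinj, hfpriv⟩ := family_inj hG 𝒯 hconn hind hdc hlam
    have hfbij : Function.Bijective f := by
      rw [Nat.bijective_iff_injective_and_card]
      exact ⟨hfinj, by rw [Nat.card_coe_set_eq, hcard, Nat.card_eq_fintype_card]⟩
    have hgex : ∀ v : V, ∃ Tm, Tm ∈ 𝒯 ∧ v ∈ Tm.verts ∧ ∀ S ∈ 𝒯, v ∈ S.verts → Tm ≤ S := by
      intro v
      obtain ⟨T0, hT0⟩ := hfbij.2 v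
      set C : Set G.Subgraph := {S | S ∈ 𝒯 ∧ v ∈ S.verts} with hC
      have hne : C.Nonempty := ⟨T0, T0.2, hT0 ▸ (hfpriv T0).1⟩
      obtain ⟨Tm, hTmC, hTmmin⟩ := Set.Finite.exists_minimalFor id C (Set.toFinite C) hne
      refine ⟨Tm, hTmC.1, hTmC.2, ?_⟩
      intro S hS hvS
      rcases eq_or_ne Tm S with rfl | hne'
      · exact le_refl _
      · have hnest : Nested Tm S := by
          by_contra hn
          exact hlam hTmC.1 hS hne' ⟨⟨v, hTmC.2, hvS⟩, hn⟩
        rcases hnest with h | h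
        · exact h
        · exact hTmmin ⟨hS, hvS⟩ h
    choose g hg𝒯 hgmem hgmin using hgex
    have hgf : ∀ T : 𝒯, g (f T) = T := by
      intro T
      have h1 : g (f T) ≤ T := hgmin (f T) T T.2 (hfpriv T).1
      rcases eq_or_lt_of_le h1 with h | h
      · exact h
      · exact absurd (hgmem (f T)) ((hfpriv T).2 _ (hg𝒯 (f T)) h)
    have hginj : Function.Injective g := by
      intro u v he
      obtain ⟨Tu, rfl⟩ := hfbij.2 u
      obtain ⟨Tv, rfl⟩ := hfbij.2 v
      rw [hgf Tu, hgf Tv] at he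
      exact congrArg f (Subtype.ext he)
    have hbij : Set.BijOn g Set.univ 𝒯 := by
      refine ⟨fun v _ => hg𝒯 v, hginj.injOn, ?_⟩
      intro T hT
      exact ⟨f ⟨T, hT⟩, Set.mem_univ _, hgf ⟨T, hT⟩⟩
    have horder : ∀ u v, H u v → g u < g v := by
      intro u v huv
      have hne : u ≠ v := fun e => hac v (by rw [e] at huv; exact Relation.TransGen.single huv)
      have hu : u ∈ (g v).verts := hdc (g v) (hg𝒯 v) u v huv (hgmem v)
      exact lt_of_le_of_ne (hgmin u (g v) (hg𝒯 v) hu) (fun e => hne (hginj e))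
    have hlabel : IsVertexLabeling G 𝒯 g := by
      refine ⟨hbij, fun v => ⟨hgmem v, fun S hS hlt hvS => ?_⟩⟩
      exact absurd (hgmin v S hS hvS) hlt.not_ge
    have hcompat : 𝒯.Pairwise Compatible := fun S hS T hT hne =>
      compatible_of_dc hG (hdc S hS) (hdc T hT) (hlam hS hT hne)
    refine ⟨⟨⟨htube, hcompat⟩, ?_⟩, g, hlabel, horder⟩
    intro 𝒞 h𝒞 hsub U hU
    by_contra hUn
    have hUconn : IsTube G U := (h𝒞.1 U hU).1
    have hUind : U.IsInduced := (h𝒞.1 U hU).2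
    have hUne : ∀ T ∈ 𝒯, U ≠ T := fun T hT e => hUn (e ▸ hT)
    have hcompU : ∀ T ∈ 𝒯, Compatible U T := fun T hT => h𝒞.2 hU (hsub hT) (hUne T hT)
    have hdcU : ∀ u w, H u w → w ∈ U.verts → u ∈ U.verts := by
      intro u w huw hwU
      by_contra huU
      have hne : u ≠ w := fun e => hac w (by rw [e] at huw; exact Relation.TransGen.single huw)
      have hadj : G.Adj u w := by
        rw [hG]
        exact (SimpleGraph.fromRel_adj H u w).mpr ⟨hne, Or.inl huw⟩
      have hugw : u ∈ (g w).verts := hdc (g w) (hg𝒯 w) u w huw (hgmem w)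
      have hUgw : U ≤ g w := by
        have hnest : Nested U (g w) := by
          by_contra hn
          exact hcompU (g w) (hg𝒯 w) ⟨⟨w, u, hadj.symm, hwU, hugw⟩, hn⟩
        rcases hnest with h | h
        · exact h
        · exact absurd (SimpleGraph.Subgraph.verts_mono h hugw) huU
      have hUgu : U ≤ g u := by
        have hnest : Nested U (g u) := by
          by_contra hn
          exact hcompU (g u) (hg𝒯 u) ⟨⟨w, u, hadj.symm, hwU, hgmem u⟩, hn⟩
        rcases hnest with h | h
        · exact h
        · exact absurd (SimpleGraph.Subgraph.verts_mono h (hgmem u)) huU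
      have hle : g w ≤ g u := hgmin w (g u) (hg𝒯 u) (SimpleGraph.Subgraph.verts_mono hUgu hwU)
      exact (horder u w huw).not_ge hle
    have hsym : Symmetric (fun S T : G.Subgraph => ¬ Overlapping S T) :=
      fun S T h hov => h (overlapping_symm hov)
    have hlam' : (insert U 𝒯).Pairwise fun S T => ¬ Overlapping S T := by
      refine (have : Std.Symm (fun S T : G.Subgraph => ¬ Overlapping S T) := ⟨fun a b h => hsym h⟩; Set.pairwise_insert_of_symm).2 ⟨hlam, ?_⟩
      intro T hT _ hov
      exact hcompU T hT (overlapping_incompatible hUconn (hind T hT) hov)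
    have hle : (insert U 𝒯).ncard ≤ Fintype.card V := by
      refine family_card_le hG (insert U 𝒯) ?_ ?_ ?_ hlam'
      · rintro T (rfl | hT)
        exacts [hUconn, hconn T hT]
      · rintro T (rfl | hT)
        exacts [hUind, hind T hT]
      · rintro T (rfl | hT)
        exacts [hdcU, hdc T hT]
    have heq : (insert U 𝒯).ncard = 𝒯.ncard + 1 :=
      Set.ncard_insert_of_notMem hUn (Set.toFinite 𝒯)
    omega

end Cosmo
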